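/- Let f : ℝ → ℝ be continuously differentiable with f′(t) ≠ 0 for all t ∈ ℝ. Then (θ, ψ) = (0, 0) is the unique zero of the Dirac-GAN gradient vector field v(θ, ψ) = (−f′(θψ)ψ, f′(θψ)θ), and the Jacobian matrix of v at (0, 0) equals [[0, −f′(0)], [f′(0), 0]], whose (complex) eigenvalues are the two purely imaginary numbers ±f′(0)·i. -/

import Mathlib

open Matrix

/-- The Dirac-GAN gradient vector field `v(θ, ψ) = (−f′(θψ)ψ, f′(θψ)θ)` has `(0, 0)` as its
unique zero, its Jacobian at `(0,0)` is `[[0, −f′(0)], [f′(0), 0]]`, and the complex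
eigenvalues of that Jacobian are `±f′(0)·i`. -/
theorem dirac_gan_unique_equilibrium_and_eigenvalues
    (f : ℝ → ℝ) (hf : ContDiff ℝ 1 f) (hf' : ∀ t : ℝ, deriv f t ≠ 0)
    (v : (Fin 2 → ℝ) → (Fin 2 → ℝ))
    (hv : ∀ x : Fin 2 → ℝ,
      v x = ![-(deriv f (x 0 * x 1)) * x 1, deriv f (x 0 * x 1) * x 0]) :
    (∀ x : Fin 2 → ℝ, v x = 0 ↔ x = 0) ∧
    HasFDerivAt v
      (LinearMap.toContinuousLinearMap
        (Matrix.toLin' (!![0, -(deriv f 0); deriv f 0, 0] : Matrix (Fin 2) (Fin 2) ℝ)))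
      0 ∧
    spectrum ℂ
        ((!![0, -(deriv f 0); deriv f 0, 0] : Matrix (Fin 2) (Fin 2) ℝ).map Complex.ofReal)
      = {Complex.ofReal (deriv f 0) * Complex.I,
         -(Complex.ofReal (deriv f 0) * Complex.I)} := by
  refine ⟨?_, ?_, ?_⟩
  · -- unique zero
    intro x
    constructor
    · intro h
      rw [hv x] at h
      have h0 : -(deriv f (x 0 * x 1)) * x 1 = 0 := congrFun h 0
      have h1 : deriv f (x 0 * x 1) * x 0 = 0 := congrFun h 1
      have hne := hf' (x 0 * x 1)
      have hx0 : x 0 = 0 := by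
        rcases mul_eq_zero.1 h1 with h | h
        · exact absurd h hne
        · exact h
      have hx1 : x 1 = 0 := by
        rcases mul_eq_zero.1 h0 with h | h
        · exact absurd (neg_eq_zero.1 h) hne
        · exact h
      funext i; fin_cases i <;> simpa [hx0, hx1]
    · intro h
      subst h
      rw [hv]
      funext i; fin_cases i <;> simp
  · -- Jacobian
    rw [hasFDerivAt_iff_isLittleO_nhds_zero, Asymptotics.isLittleO_iff]
    intro ε hε
    have hc : Continuous (deriv f) := hf.continuous_deriv le_rfl
    have htend : Filter.Tendsto (fun h : Fin 2 → ℝ => deriv f (h 0 * h 1))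
        (nhds 0) (nhds (deriv f 0)) := by
      have hmul : Filter.Tendsto (fun h : Fin 2 → ℝ => h 0 * h 1) (nhds 0) (nhds 0) := by
        have := ((continuous_apply (0 : Fin 2)).mul (continuous_apply (1 : Fin 2))).tendsto
          (0 : Fin 2 → ℝ)
        simpa only [Pi.mul_def, Pi.zero_apply, mul_zero] using this
      exact (hc.tendsto 0).comp hmul
    have hev : ∀ᶠ h in nhds (0 : Fin 2 → ℝ), |deriv f (h 0 * h 1) - deriv f 0| ≤ ε := by
      rw [Metric.tendsto_nhds] at htend
      filter_upwards [htend ε hε] with h hh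
      rw [Real.dist_eq] at hh
      exact hh.le
    filter_upwards [hev] with h hh
    have hnn : (0:ℝ) ≤ ε * ‖h‖ := mul_nonneg hε.le (norm_nonneg _)
    rw [pi_norm_le_iff_of_nonneg hnn]
    intro i
    have hb : ∀ j : Fin 2, |h j| ≤ ‖h‖ := fun j => norm_le_pi_norm h j
    set A := deriv f (h 0 * h 1) with hA
    set A0 := deriv f 0 with hA0
    fin_cases i <;>
      simp only [hv, Pi.sub_apply, Pi.zero_apply, Pi.add_apply, zero_add,
        LinearMap.coe_toContinuousLinearMap',
        Matrix.toLin'_apply, Matrix.mulVec, dotProduct, Fin.sum_univ_two,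
        Fin.mk_zero, Fin.mk_one, Fin.isValue, Matrix.of_apply,
        Matrix.cons_val_zero, Matrix.cons_val_one, Matrix.head_cons,
        Matrix.cons_val', Matrix.empty_val', Matrix.cons_val_fin_one,
        mul_zero, zero_mul, sub_zero, neg_zero, Matrix.vecHead, Real.norm_eq_abs]
    · rw [← hA]
      have e : -A * h 1 - -A0 * h 1 = (A0 - A) * h 1 := by ring
      rw [e, abs_mul, abs_sub_comm]
      exact mul_le_mul hh (hb 1) (abs_nonneg _) hε.le
    · rw [← hA]
      have e : A * h 0 - (A0 * h 0 + 0) = (A - A0) * h 0 := by ring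
      rw [e, abs_mul]
      exact mul_le_mul hh (hb 0) (abs_nonneg _) hε.le
  · -- eigenvalues
    set a : ℂ := Complex.ofReal (deriv f 0) with ha
    have ha0 : a ≠ 0 := by
      simpa [ha] using hf' 0
    ext μ
    simp only [spectrum.mem_iff, Set.mem_insert_iff, Set.mem_singleton_iff]
    rw [Matrix.isUnit_iff_isUnit_det, isUnit_iff_ne_zero, not_not]
    have hdet : ((algebraMap ℂ (Matrix (Fin 2) (Fin 2) ℂ)) μ -
        ((!![0, -(deriv f 0); deriv f 0, 0] : Matrix (Fin 2) (Fin 2) ℝ).map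
          Complex.ofReal)).det = (μ - a * Complex.I) * (μ + a * Complex.I) := by
      simp [Matrix.det_fin_two, Matrix.algebraMap_matrix_apply, ha]
      linear_combination (a * a) * Complex.I_sq
    rw [hdet, mul_eq_zero, sub_eq_zero]
    constructor
    · rintro (h | h)
      · exact Or.inl h
      · exact Or.inr (eq_neg_of_add_eq_zero_left h)
    · rintro (h | h)
      · exact Or.inl h
      · exact Or.inr (by rw [h]; ring)
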